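/- Let l = (l_1, ..., l_n) be the path-length sequence of a topological binary tree with leaves v_1, ..., v_n in left-to-right order, and let S = [i,j] be a full segment with neighborhood maximin parameter m = m(S). Then 2^m · K(S) equals the number of distinct ancestors at depth m of the leaves v_i, ..., v_j, where K(S) is the partial Kraft sum 2^{-l_i} + ... + 2^{-l_j}. -/

import Mathlib

/-- Minimum of the values `l i, ..., l j`. -/
def segMin (l : ℕ → ℕ) (i j : ℕ) : ℕ :=
  (Finset.Icc i j).fold min (l i) l

/-- Neighborhood maximin parameter `m[i,j]`: the maximum of `min(l h, ..., l k)` over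
subintervals `[h,k]` of `[1,n]` properly containing `[i,j]`, with value `0` if there
are none (in particular for `[i,j] = [1,n]`). -/
def nmaxim (l : ℕ → ℕ) (n i j : ℕ) : ℕ :=
  (((Finset.Icc 1 i) ×ˢ (Finset.Icc j n)).filter (fun p => p ≠ (i, j))).fold max 0
    (fun p => segMin l p.1 p.2)

/-- `[i,j]` is a full segment (island) of the sequence `l` restricted to `[1,n]`. -/
def IsFullSeg (l : ℕ → ℕ) (n i j : ℕ) : Prop :=
  1 ≤ i ∧ i ≤ j ∧ j ≤ n ∧ nmaxim l n i j < segMin l i j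

/-- Partial Kraft sum `K[i,j] = 2^{-l_i} + ... + 2^{-l_j}`. -/
noncomputable def kraft (l : ℕ → ℕ) (i j : ℕ) : ℝ :=
  ∑ k ∈ Finset.Icc i j, ((2:ℝ) ^ (l k))⁻¹

/-- A topological binary tree: every internal node has exactly a left and a right son. -/
inductive BTree : Type
  | leaf : BTree
  | node : BTree → BTree → BTree

/-- The left-to-right (topologically ordered) path-length sequence: depths of leaves. -/
def BTree.depths : BTree → List ℕ
  | .leaf => [0]
  | .node L R => (L.depths.map (· + 1)) ++ (R.depths.map (· + 1))

/-- The codewords of the leaves in left-to-right order (`false` = 0 = left, `true` = 1 = right). -/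
def BTree.codes : BTree → List (List Bool)
  | .leaf => [[]]
  | .node L R => (L.codes.map (List.cons false)) ++ (R.codes.map (List.cons true))


def bval : List Bool → ℕ
  | [] => 0
  | b :: c => (cond b 1 0) * 2 ^ c.length + bval c

lemma bval_lt (c : List Bool) : bval c < 2 ^ c.length := by
  induction c with
  | nil => simp [bval]
  | cons b c ih =>
    simp only [bval, List.length_cons, pow_succ]
    cases b <;> simp <;> omega

lemma bval_append (a b : List Bool) :
    bval (a ++ b) = bval a * 2 ^ b.length + bval b := by
  induction a with
  | nil => simp [bval]
  | cons x a ih =>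
    simp only [List.cons_append, bval, ih]
    rw [List.length_append, pow_add]
    ring

lemma bval_inj : ∀ {c₁ c₂ : List Bool}, c₁.length = c₂.length →
    bval c₁ = bval c₂ → c₁ = c₂ := by
  intro c₁
  induction c₁ with
  | nil => intro c₂ h _; exact (List.length_eq_zero_iff.mp h.symm).symm
  | cons b c ih =>
    intro c₂ h hv
    cases c₂ with
    | nil => simp at h
    | cons b₂ d =>
      simp only [List.length_cons, Nat.succ_inj] at h
      have h1 := bval_lt c
      have h2 := bval_lt d
      simp only [bval, h] at hv
      have hb : b = b₂ := by
        cases b <;> cases b₂ <;> simp_all <;> omega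
      subst hb
      have : bval c = bval d := by cases b <;> simp at hv <;> omega
      rw [ih h this]
lemma codes_length (t : BTree) : t.codes.length = t.depths.length := by
  induction t with
  | leaf => rfl
  | node L R ihL ihR => simp [BTree.codes, BTree.depths, ihL, ihR]

lemma getD_append_left {α : Type*} (a b : List α) (d : α) (k : ℕ) (hk : k < a.length) :
    (a ++ b).getD k d = a.getD k d := by
  rw [List.getD_eq_getElem _ _ (by simp; omega), List.getD_eq_getElem _ _ hk,
    List.getElem_append_left hk]

lemma getD_append_right {α : Type*} (a b : List α) (d : α) (k : ℕ) (hk : k < b.length) :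
    (a ++ b).getD (a.length + k) d = b.getD k d := by
  rw [List.getD_eq_getElem _ _ (by simp; omega), List.getD_eq_getElem _ _ hk]
  simp [List.getElem_append_right, Nat.add_sub_cancel_left]

lemma getD_map {α β : Type*} (f : α → β) (a : List α) (d : α) (d' : β) (k : ℕ)
    (hk : k < a.length) : (a.map f).getD k d' = f (a.getD k d) := by
  rw [List.getD_eq_getElem _ _ (by simpa), List.getD_eq_getElem _ _ hk, List.getElem_map]

lemma depths_length_pos (t : BTree) : 0 < t.depths.length := by
  induction t with
  | leaf => simp [BTree.depths]
  | node L R ihL ihR => simp [BTree.depths]; omega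

lemma code_len (t : BTree) (k : ℕ) (hk : k < t.depths.length) :
    (t.codes.getD k []).length = t.depths.getD k 0 := by
  induction t generalizing k with
  | leaf =>
    obtain rfl : k = 0 := by simpa [BTree.depths, Nat.lt_one_iff] using hk
    rfl
  | node L R ihL ihR =>
    simp only [BTree.depths, List.length_append, List.length_map] at hk
    simp only [BTree.codes, BTree.depths]
    by_cases hL : k < L.depths.length
    · rw [getD_append_left _ _ _ _ (by simpa [codes_length]),
        getD_append_left _ _ _ _ (by simpa),
        getD_map _ _ [] _ _ (by simpa [codes_length]),
        getD_map _ _ 0 _ _ (by simpa)]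
      simp only [List.length_cons, ihL k hL]
    · obtain ⟨k', rfl⟩ : ∃ k', k = L.depths.length + k' := ⟨k - L.depths.length, by omega⟩
      have hk' : k' < R.depths.length := by omega
      rw [show L.depths.length = (L.codes.map (List.cons false)).length by
          simp [codes_length],
        getD_append_right _ _ _ _ (by simpa [codes_length]),
        show (L.codes.map (List.cons false)).length = (L.depths.map (· + 1)).length by
          simp [codes_length],
        getD_append_right _ _ _ _ (by simpa),
        getD_map _ _ [] _ _ (by simpa [codes_length]),
        getD_map _ _ 0 _ _ (by simpa)]
      simp only [List.length_cons, ihR k' hk']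

lemma kraft_one (t : BTree) :
    ∑ k ∈ Finset.range t.depths.length, ((2:ℝ) ^ (t.depths.getD k 0))⁻¹ = 1 := by
  induction t with
  | leaf => simp [BTree.depths]
  | node L R ihL ihR =>
    show ∑ k ∈ Finset.range ((L.depths.map (· + 1)) ++ (R.depths.map (· + 1))).length,
      (((2:ℝ) ^ (((L.depths.map (· + 1)) ++ (R.depths.map (· + 1))).getD k 0))⁻¹) = 1
    rw [List.length_append, List.length_map, List.length_map, Finset.sum_range_add]
    have h1 : ∀ k ∈ Finset.range L.depths.length,
        ((2:ℝ) ^ (((L.depths.map (· + 1)) ++ (R.depths.map (· + 1))).getD k 0))⁻¹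
        = (1/2) * ((2:ℝ) ^ (L.depths.getD k 0))⁻¹ := by
      intro k hk
      rw [Finset.mem_range] at hk
      rw [getD_append_left _ _ _ _ (by simpa), getD_map _ _ 0 _ _ (by simpa)]
      rw [pow_succ, mul_inv]
      ring
    have h2 : ∀ k ∈ Finset.range R.depths.length,
        ((2:ℝ) ^ (((L.depths.map (· + 1)) ++ (R.depths.map (· + 1))).getD
          (L.depths.length + k) 0))⁻¹
        = (1/2) * ((2:ℝ) ^ (R.depths.getD k 0))⁻¹ := by
      intro k hk
      rw [Finset.mem_range] at hk
      rw [show L.depths.length = (L.depths.map (· + 1)).length by simp,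
        getD_append_right _ _ _ _ (by simpa), getD_map _ _ 0 _ _ (by simpa)]
      rw [pow_succ, mul_inv]
      ring
    rw [Finset.sum_congr rfl h1, Finset.sum_congr rfl h2, ← Finset.mul_sum, ← Finset.mul_sum,
      ihL, ihR]
    norm_num

lemma bval_code (t : BTree) (k : ℕ) (hk : k < t.depths.length) :
    (bval (t.codes.getD k []) : ℝ) * ((2:ℝ) ^ (t.depths.getD k 0))⁻¹ =
      ∑ t' ∈ Finset.range k, ((2:ℝ) ^ (t.depths.getD t' 0))⁻¹ := by
  induction t generalizing k with
  | leaf =>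
    obtain rfl : k = 0 := by simpa [BTree.depths, Nat.lt_one_iff] using hk
    simp [BTree.codes, BTree.depths, bval]
  | node L R ihL ihR =>
    simp only [BTree.depths, List.length_append, List.length_map] at hk
    simp only [BTree.codes, BTree.depths]
    have hterm : ∀ t' : ℕ, t' < L.depths.length →
        ((2:ℝ) ^ (((L.depths.map (· + 1)) ++ (R.depths.map (· + 1))).getD t' 0))⁻¹
        = (1/2) * ((2:ℝ) ^ (L.depths.getD t' 0))⁻¹ := by
      intro t' ht'
      rw [getD_append_left _ _ _ _ (by simpa), getD_map _ _ 0 _ _ (by simpa)]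
      rw [pow_succ, mul_inv]; ring
    have htermR : ∀ t' : ℕ, t' < R.depths.length →
        ((2:ℝ) ^ (((L.depths.map (· + 1)) ++ (R.depths.map (· + 1))).getD
          (L.depths.length + t') 0))⁻¹
        = (1/2) * ((2:ℝ) ^ (R.depths.getD t' 0))⁻¹ := by
      intro t' ht'
      rw [show L.depths.length = (L.depths.map (· + 1)).length by simp,
        getD_append_right _ _ _ _ (by simpa), getD_map _ _ 0 _ _ (by simpa)]
      rw [pow_succ, mul_inv]; ring
    by_cases hL : k < L.depths.length
    · rw [getD_append_left _ _ _ _ (by simpa [codes_length]),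
        getD_append_left _ _ _ _ (by simpa),
        getD_map _ _ [] _ _ (by simpa [codes_length]),
        getD_map _ _ 0 _ _ (by simpa)]
      rw [Finset.sum_congr rfl (fun t' ht' => hterm t' (by
        rw [Finset.mem_range] at ht'; omega))]
      have : bval (false :: L.codes.getD k []) = bval (L.codes.getD k []) := by
        simp [bval]
      rw [this, pow_succ, mul_inv, ← Finset.mul_sum, ← ihL k hL]
      ring
    · obtain ⟨k', rfl⟩ : ∃ k', k = L.depths.length + k' := ⟨k - L.depths.length, by omega⟩
      have hk' : k' < R.depths.length := by omega
      rw [show L.depths.length = (L.codes.map (List.cons false)).length by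
          simp [codes_length],
        getD_append_right _ _ _ _ (by simpa [codes_length]),
        show (L.codes.map (List.cons false)).length = (L.depths.map (· + 1)).length by
          simp [codes_length],
        getD_append_right _ _ _ _ (by simpa),
        getD_map _ _ [] _ _ (by simpa [codes_length]),
        getD_map _ _ 0 _ _ (by simpa)]
      have hbv : (bval (true :: R.codes.getD k' []) : ℝ)
          = 2 ^ (R.depths.getD k' 0) + bval (R.codes.getD k' []) := by
        have hlen := code_len R k' hk'
        show (((cond true 1 0) * 2 ^ (R.codes.getD k' []).length
          + bval (R.codes.getD k' []) : ℕ) : ℝ) = _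
        rw [hlen]
        simp only [cond_true]
        push_cast
        ring
      have hRHS : ∑ t' ∈ Finset.range ((L.depths.map (· + 1)).length + k'),
          ((2:ℝ) ^ (((L.depths.map (· + 1)) ++ (R.depths.map (· + 1))).getD t' 0))⁻¹
          = 1/2 + (1/2) * ∑ t' ∈ Finset.range k', ((2:ℝ) ^ (R.depths.getD t' 0))⁻¹ := by
        rw [List.length_map, Finset.sum_range_add,
          Finset.sum_congr rfl (fun t' ht' => hterm t' (by
            rw [Finset.mem_range] at ht'; omega)),
          Finset.sum_congr rfl (fun t' ht' => htermR t' (by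
            rw [Finset.mem_range] at ht'; omega)),
          ← Finset.mul_sum, ← Finset.mul_sum, kraft_one]
        ring
      rw [hRHS, hbv, pow_succ, mul_inv, ← ihR k' hk']
      have h2 : (2:ℝ) ^ (R.depths.getD k' 0) * ((2:ℝ) ^ (R.depths.getD k' 0))⁻¹ = 1 :=
        mul_inv_cancel₀ (by positivity)
      linear_combination h2 / 2
lemma image_Icc_of_step (g : ℕ → ℤ) (i : ℕ) :
    ∀ j, i ≤ j → (∀ k, i ≤ k → k < j → g k ≤ g (k+1) ∧ g (k+1) ≤ g k + 1) →
    (Finset.Icc i j).image g = Finset.Icc (g i) (g j) := by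
  intro j
  induction j with
  | zero =>
    intro hij _
    obtain rfl : i = 0 := Nat.le_zero.mp hij
    simp
  | succ j ih =>
    intro hij hstep
    rcases Nat.lt_or_ge i (j+1) with hlt | hge
    · have hij' : i ≤ j := by omega
      have ihj := ih hij' (fun k hk hk' => hstep k hk (by omega))
      have hgi : g i ≤ g j := by
        have : g i ∈ Finset.Icc (g i) (g j) := by
          rw [← ihj]; exact Finset.mem_image_of_mem g (by simp [hij'])
        exact (Finset.mem_Icc.mp this).2
      have hIcc : Finset.Icc i (j+1) = insert (j+1) (Finset.Icc i j) := by
        ext x; simp [Finset.mem_Icc]; omega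
      rw [hIcc, Finset.image_insert, ihj]
      obtain ⟨h1, h2⟩ := hstep j hij' (by omega)
      ext x
      simp only [Finset.mem_insert, Finset.mem_Icc]
      omega
    · obtain rfl : i = j + 1 := by omega
      simp

noncomputable def psum (t : BTree) (k : ℕ) : ℝ :=
  ∑ t' ∈ Finset.range k, ((2:ℝ) ^ (t.depths.getD t' 0))⁻¹

lemma psum_succ (t : BTree) (k : ℕ) :
    psum t (k+1) = psum t k + ((2:ℝ) ^ (t.depths.getD k 0))⁻¹ :=
  Finset.sum_range_succ _ _

lemma bval_code' (t : BTree) (k : ℕ) (hk : k < t.depths.length) :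
    (bval (t.codes.getD k []) : ℝ) * ((2:ℝ) ^ (t.depths.getD k 0))⁻¹ = psum t k :=
  bval_code t k hk

lemma segMin_le {l : ℕ → ℕ} {i j k : ℕ} (h1 : i ≤ k) (h2 : k ≤ j) : segMin l i j ≤ l k :=
  (Finset.fold_min_le _).mpr (Or.inr ⟨k, Finset.mem_Icc.mpr ⟨h1, h2⟩, le_rfl⟩)

lemma le_segMin {l : ℕ → ℕ} {c i j : ℕ} (hb : c ≤ l i) (h : ∀ k, i ≤ k → k ≤ j → c ≤ l k) :
    c ≤ segMin l i j :=
  (Finset.le_fold_min _).mpr ⟨hb, fun k hk =>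
    h k (Finset.mem_Icc.mp hk).1 (Finset.mem_Icc.mp hk).2⟩

lemma segMin_le_nmaxim {l : ℕ → ℕ} {n i j a b : ℕ} (h1 : 1 ≤ a) (h2 : a ≤ i)
    (h3 : j ≤ b) (h4 : b ≤ n) (h5 : (a, b) ≠ (i, j)) :
    segMin l a b ≤ nmaxim l n i j :=
  (Finset.le_fold_max _).mpr (Or.inr ⟨(a, b), by
    simp only [Finset.mem_filter, Finset.mem_product, Finset.mem_Icc]
    exact ⟨⟨⟨h1, h2⟩, ⟨h3, h4⟩⟩, h5⟩, le_rfl⟩)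

/-- Key decomposition: `2^m · psum t k = bval(prefix of length m) + fractional part`. -/
lemma key_decomp (t : BTree) (k m : ℕ) (hk : k < t.depths.length)
    (hm : m ≤ t.depths.getD k 0) :
    ∃ r : ℝ, 0 ≤ r ∧ r < 1 ∧
      2 ^ m * psum t k = (bval ((t.codes.getD k []).take m) : ℝ) + r := by
  set c := t.codes.getD k [] with hc
  set D := t.depths.getD k 0 with hD
  have hlen : c.length = D := code_len t k hk
  have hld' : (c.drop m).length = D - m := by rw [List.length_drop, hlen]
  have hbv : bval c = bval (c.take m) * 2 ^ (D - m) + bval (c.drop m) := by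
    conv_lhs => rw [show c = c.take m ++ c.drop m from (List.take_append_drop m c).symm]
    rw [bval_append, hld']
  have hT4 : (bval c : ℝ) * ((2:ℝ) ^ D)⁻¹ = psum t k := bval_code' t k hk
  have hDpos : (0:ℝ) < 2 ^ (D - m) := by positivity
  refine ⟨(bval (c.drop m) : ℝ) * ((2:ℝ) ^ (D - m))⁻¹, by positivity, ?_, ?_⟩
  · rw [← div_eq_mul_inv, div_lt_one hDpos]
    have hb := bval_lt (c.drop m)
    rw [hld'] at hb
    exact_mod_cast hb
  · have e1 : (2:ℝ) ^ D = 2 ^ m * 2 ^ (D - m) := by rw [← pow_add]; congr 1; omega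
    rw [← hT4, hbv, e1]
    push_cast
    have h1 : ((2:ℝ) ^ m) ≠ 0 := by positivity
    have h2 : ((2:ℝ) ^ (D - m)) ≠ 0 := by positivity
    field_simp

/-- For a full segment `S = [i,j]` with maximin `m`, `2^m · K(S)` counts the distinct
depth-`m` ancestors (length-`m` codeword prefixes) of the leaves `v_i, ..., v_j`. -/
theorem scaled_kraft_counts_ancestors (t : BTree) (n : ℕ) (l : ℕ → ℕ)
    (hn : n = t.depths.length)
    (hl : ∀ k ∈ Finset.Icc 1 n, l k = t.depths.getD (k - 1) 0)
    (i j : ℕ) (h : IsFullSeg l n i j) :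
    (2:ℝ) ^ (nmaxim l n i j) * kraft l i j =
      ((Finset.Icc i j).image
        (fun k => (t.codes.getD (k - 1) []).take (nmaxim l n i j))).card := by
  obtain ⟨hi1, hij, hjn, hfull⟩ := h
  set m := nmaxim l n i j with hm
  have hld : ∀ k, 1 ≤ k → k ≤ n → l k = t.depths.getD (k-1) 0 :=
    fun k h1 h2 => hl k (Finset.mem_Icc.mpr ⟨h1, h2⟩)
  have hsm : ∀ k, i ≤ k → k ≤ j → m + 1 ≤ l k := by
    intro k h1 h2
    have h3 : segMin l i j ≤ l k := segMin_le h1 h2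
    omega
  -- the left neighbor (if any) is short
  have hleft : 2 ≤ i → l (i-1) ≤ m := by
    intro h2
    by_contra hc
    have h4 : m + 1 ≤ segMin l (i-1) j := by
      refine le_segMin (by omega) ?_
      intro x hx1 hx2
      rcases Nat.eq_or_lt_of_le hx1 with he | hxi
      · rw [← he]; omega
      · exact hsm x (by omega) hx2
    have h5 : segMin l (i-1) j ≤ m :=
      segMin_le_nmaxim (by omega) (by omega) le_rfl hjn (by simp; omega)
    omega
  -- the right neighbor (if any) is short
  have hright : j + 1 ≤ n → l (j+1) ≤ m := by
    intro h2
    by_contra hc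
    have h4 : m + 1 ≤ segMin l i (j+1) := by
      refine le_segMin (by have := hsm i le_rfl hij; omega) ?_
      intro x hx1 hx2
      rcases Nat.eq_or_lt_of_le hx2 with he | hxi
      · rw [he]; omega
      · exact hsm x hx1 (by omega)
    have h5 : segMin l i (j+1) ≤ m :=
      segMin_le_nmaxim hi1 le_rfl (by omega) h2 (by simp)
    omega
  -- key floor decomposition for leaves in the segment
  have hkey : ∀ k, i ≤ k → k ≤ j → ∃ r : ℝ, 0 ≤ r ∧ r < 1 ∧
      2 ^ m * psum t (k-1) = (bval ((t.codes.getD (k-1) []).take m) : ℝ) + r := by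
    intro k h1 h2
    have hkd : k - 1 < t.depths.length := by rw [← hn]; omega
    have hmd : m ≤ t.depths.getD (k-1) 0 := by
      have := hsm k h1 h2
      rw [hld k (by omega) (by omega)] at this
      omega
    exact key_decomp t (k-1) m hkd hmd
  -- successor relation for partial sums inside the segment
  have hsucc : ∀ k, 1 ≤ k → k ≤ n →
      psum t k = psum t (k-1) + ((2:ℝ) ^ (l k))⁻¹ := by
    intro k h1 h2
    conv_lhs => rw [show k = (k-1)+1 by omega]
    rw [psum_succ, hld k h1 h2]
  -- integrality at the left end
  have hA : ∃ A : ℕ, (A:ℝ) = 2 ^ m * psum t (i-1) := by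
    rcases Nat.lt_or_ge i 2 with h2 | h2
    · obtain rfl : i = 1 := by omega
      exact ⟨0, by simp [psum]⟩
    · have hlm := hleft h2
      have hkd : i - 2 < t.depths.length := by rw [← hn]; omega
      have hT4 : (bval (t.codes.getD (i-2) []) : ℝ) *
          ((2:ℝ) ^ (t.depths.getD (i-2) 0))⁻¹ = psum t (i-2) := bval_code' t (i-2) hkd
      have hdl : t.depths.getD (i-2) 0 = l (i-1) := by
        rw [hld (i-1) (by omega) (by omega)]
        congr 1
      have hs' : psum t (i-1) = psum t (i-2) + ((2:ℝ) ^ (l (i-1)))⁻¹ := by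
        have := hsucc (i-1) (by omega) (by omega)
        rwa [show i-1-1 = i-2 by omega] at this
      refine ⟨(bval (t.codes.getD (i-2) []) + 1) * 2 ^ (m - l (i-1)), ?_⟩
      have e1 : (2:ℝ) ^ m = 2 ^ (m - l (i-1)) * 2 ^ (l (i-1)) := by
        rw [← pow_add]; congr 1; omega
      rw [hs', ← hT4, hdl, e1]
      push_cast
      have h1 : ((2:ℝ) ^ (l (i-1))) ≠ 0 := by positivity
      field_simp
  -- integrality at the right end
  have hB : ∃ B : ℕ, (B:ℝ) = 2 ^ m * psum t j := by
    rcases Nat.lt_or_ge j n with hlt | hge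
    · have hjm := hright (by omega)
      have hkd : j < t.depths.length := by rw [← hn]; omega
      have hT4 : (bval (t.codes.getD j []) : ℝ) *
          ((2:ℝ) ^ (t.depths.getD j 0))⁻¹ = psum t j := bval_code' t j hkd
      have hdl : t.depths.getD j 0 = l (j+1) := by
        rw [hld (j+1) (by omega) (by omega)]
        congr 1
      refine ⟨bval (t.codes.getD j []) * 2 ^ (m - l (j+1)), ?_⟩
      have e1 : (2:ℝ) ^ m = 2 ^ (m - l (j+1)) * 2 ^ (l (j+1)) := by
        rw [← pow_add]; congr 1; omega
      rw [← hT4, hdl, e1]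
      push_cast
      have h1 : ((2:ℝ) ^ (l (j+1))) ≠ 0 := by positivity
      field_simp
    · obtain rfl : j = n := le_antisymm hjn hge
      refine ⟨2 ^ m, ?_⟩
      have h1 : psum t j = 1 := by unfold psum; rw [hn]; exact kraft_one t
      rw [h1]
      push_cast
      ring
  obtain ⟨A, hA⟩ := hA
  obtain ⟨B, hB⟩ := hB
  -- the kraft sum as a difference of partial sums
  have hkraft : kraft l i j = psum t j - psum t (i-1) := by
    rw [kraft]
    have himg : Finset.Icc i j = (Finset.Ico (i-1) j).image (· + 1) := by
      rw [Finset.image_add_right_Ico, show i - 1 + 1 = i by omega, Finset.Ico_add_one_right_eq_Icc]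
    rw [himg, Finset.sum_image (by intro a _ b _ hab; simp at hab; omega)]
    have hcong : ∀ x ∈ Finset.Ico (i-1) j,
        ((2:ℝ) ^ (l (x+1)))⁻¹ = ((2:ℝ) ^ (t.depths.getD x 0))⁻¹ := by
      intro x hx
      rcases Finset.mem_Ico.mp hx with ⟨h1, h2⟩
      rw [hld (x+1) (by omega) (by omega), show x + 1 - 1 = x by omega]
    rw [Finset.sum_congr rfl hcong, Finset.sum_Ico_eq_sub _ (by omega)]
    rfl
  -- the integer prefix-value function
  set φ : ℕ → ℤ := fun k => (bval ((t.codes.getD (k-1) []).take m) : ℤ) with hφ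
  have hstep : ∀ k, i ≤ k → k < j → φ k ≤ φ (k+1) ∧ φ (k+1) ≤ φ k + 1 := by
    intro k h1 h2
    obtain ⟨r, hr0, hr1, he⟩ := hkey k h1 (by omega)
    obtain ⟨r', hr0', hr1', he'⟩ := hkey (k+1) (by omega) (by omega)
    rw [show k + 1 - 1 = k by omega] at he'
    have hsk := hsucc k (by omega) (by omega)
    have hml := hsm k h1 (by omega)
    have heps1 : 2 ^ m * ((2:ℝ) ^ (l k))⁻¹ ≤ 1/2 := by
      have h2' : (0:ℝ) < 2 ^ (l k) := by positivity
      rw [← div_eq_mul_inv, div_le_iff₀ h2']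
      have h3' : (2:ℝ) ^ (m+1) ≤ 2 ^ (l k) := pow_le_pow_right₀ (by norm_num) hml
      rw [pow_succ] at h3'
      linarith
    have heps0 : (0:ℝ) < 2 ^ m * ((2:ℝ) ^ (l k))⁻¹ := by positivity
    have hkey2 : (φ (k+1) : ℝ) + r' = (φ k : ℝ) + r + 2 ^ m * ((2:ℝ) ^ (l k))⁻¹ := by
      rw [hφ]
      push_cast
      rw [← he, ← he', hsk]
      ring
    constructor
    · have hlt : (φ k : ℝ) < (φ (k+1) : ℝ) + 1 := by linarith
      have : (φ k : ℤ) < φ (k+1) + 1 := by exact_mod_cast hlt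
      omega
    · have hlt : (φ (k+1) : ℝ) < (φ k : ℝ) + 2 := by linarith
      have : (φ (k+1) : ℤ) < φ k + 2 := by exact_mod_cast hlt
      omega
  -- endpoints of the prefix-value function
  have hphii : φ i = (A : ℤ) := by
    obtain ⟨r, hr0, hr1, he⟩ := hkey i le_rfl hij
    have h1 : (φ i : ℝ) ≤ (A : ℝ) := by rw [hA, he, hφ]; push_cast; linarith
    have h2 : (A : ℝ) < (φ i : ℝ) + 1 := by rw [hA, he, hφ]; push_cast; linarith
    have h1' : φ i ≤ (A : ℤ) := by exact_mod_cast h1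
    have h2' : (A : ℤ) < φ i + 1 := by exact_mod_cast h2
    omega
  have hphij : φ j = (B : ℤ) - 1 := by
    obtain ⟨r, hr0, hr1, he⟩ := hkey j hij le_rfl
    have hsk := hsucc j (by omega) hjn
    have hml := hsm j hij le_rfl
    have heps1 : 2 ^ m * ((2:ℝ) ^ (l j))⁻¹ ≤ 1/2 := by
      have h2' : (0:ℝ) < 2 ^ (l j) := by positivity
      rw [← div_eq_mul_inv, div_le_iff₀ h2']
      have h3' : (2:ℝ) ^ (m+1) ≤ 2 ^ (l j) := pow_le_pow_right₀ (by norm_num) hml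
      rw [pow_succ] at h3'
      linarith
    have heps0 : (0:ℝ) < 2 ^ m * ((2:ℝ) ^ (l j))⁻¹ := by positivity
    have hBe : (B : ℝ) = (φ j : ℝ) + r + 2 ^ m * ((2:ℝ) ^ (l j))⁻¹ := by
      rw [hB, hsk, hφ]
      push_cast
      rw [mul_add, he]
    have h1 : (φ j : ℝ) < (B : ℝ) := by linarith
    have h2 : (B : ℝ) < (φ j : ℝ) + 2 := by linarith
    have h1' : φ j < (B : ℤ) := by exact_mod_cast h1
    have h2' : (B : ℤ) < φ j + 2 := by exact_mod_cast h2
    omega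
  -- the image of φ is an integer interval
  have himg : (Finset.Icc i j).image φ = Finset.Icc (A : ℤ) ((B : ℤ) - 1) := by
    rw [← hphii, ← hphij]
    exact image_Icc_of_step φ i j hij hstep
  have hAB : (A : ℤ) ≤ (B : ℤ) - 1 := by
    have : φ i ∈ Finset.Icc (A : ℤ) ((B : ℤ) - 1) := by
      rw [← himg]
      exact Finset.mem_image_of_mem φ (by simp [hij])
    rw [hphii] at this
    exact (Finset.mem_Icc.mp this).2
  -- the two images have the same cardinality
  have hcard2 : ((Finset.Icc i j).image φ).card =
      ((Finset.Icc i j).image (fun k => (t.codes.getD (k - 1) []).take m)).card := by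
    have hcomp : (Finset.Icc i j).image φ =
        ((Finset.Icc i j).image (fun k => (t.codes.getD (k - 1) []).take m)).image
          (fun p => (bval p : ℤ)) := by
      rw [Finset.image_image]
      rfl
    rw [hcomp]
    apply Finset.card_image_of_injOn
    intro p hp q hq hpq
    have hlen : ∀ x ∈ (Finset.Icc i j).image (fun k => (t.codes.getD (k - 1) []).take m),
        x.length = m := by
      intro x hx
      obtain ⟨k, hk, rfl⟩ := Finset.mem_image.mp hx
      rcases Finset.mem_Icc.mp hk with ⟨h1, h2⟩
      have hkd : k - 1 < t.depths.length := by rw [← hn]; omega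
      have hlc : (t.codes.getD (k-1) []).length = l k := by
        rw [code_len t (k-1) hkd, ← hld k (by omega) (by omega)]
      have := hsm k h1 h2
      rw [List.length_take, hlc]
      omega
    have h1 : bval p = bval q := by
      have h2 : ((bval p : ℤ)) = bval q := hpq
      exact_mod_cast h2
    exact bval_inj (by rw [hlen p hp, hlen q hq]) h1
  -- final computation
  rw [hkraft, mul_sub, ← hA, ← hB, ← hcard2, himg, Int.card_Icc,
    show (B : ℤ) - 1 + 1 - (A : ℤ) = (B : ℤ) - A by ring]
  have h1 : (((B : ℤ) - A).toNat : ℝ) = (B : ℝ) - A := by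
    have h2 : ((((B : ℤ) - A).toNat : ℤ) : ℝ) = (((B : ℤ) - A : ℤ) : ℝ) := by
      rw [Int.toNat_of_nonneg (by omega)]
    push_cast at h2 ⊢
    linarith
  rw [h1]
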